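/- Let E be a nonempty set of positive integers and c > 1 a real number. Then limsup_{N → ∞} |E ∩ [1, N]| / |E ∩ [1, c·N]| > 0. In other words, it is not the case that |E ∩ [1, N]| / |E ∩ [1, c·N]| tends to 0. -/

import Mathlib

open Classical in
theorem stmt10 (E : Set ℕ) (hE : E.Nonempty) (hEpos : ∀ m ∈ E, 0 < m)
    (c : ℝ) (hc : 1 < c) :
    ∃ δ : ℝ, 0 < δ ∧ ∀ N₀ : ℕ, ∃ N : ℕ, N₀ ≤ N ∧
      (((Finset.Icc 1 N).filter (· ∈ E)).card : ℝ) ≥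
        δ * (((Finset.Icc 1 (⌊c * N⌋₊)).filter (· ∈ E)).card : ℝ) := by
  classical
  obtain ⟨m, hm⟩ := hE
  have hm1 : 1 ≤ m := hEpos m hm
  have hcpos : (0:ℝ) < c := lt_trans one_pos hc
  refine ⟨1/(2*c), by positivity, ?_⟩
  intro N₀
  by_contra hcon
  push_neg at hcon
  set F : ℕ → ℕ := fun N => ((Finset.Icc 1 N).filter (· ∈ E)).card with hF
  -- hcon : ∀ N, N₀ ≤ N → (F N : ℝ) < 1/(2*c) * F ⌊c*N⌋₊
  set step : ℕ → ℕ := fun n => ⌊c * (n:ℝ)⌋₊ with hstep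
  set g : ℕ → ℕ := fun k => step^[k] (max N₀ m) with hg
  have hstep_ge : ∀ n : ℕ, n ≤ step n := by
    intro n
    apply Nat.le_floor
    exact le_mul_of_one_le_left (Nat.cast_nonneg n) (le_of_lt hc)
  have hg0 : g 0 = max N₀ m := rfl
  have hgsucc : ∀ k, g (k+1) = step (g k) := by
    intro k
    simp [hg, Function.iterate_succ_apply']
  have hgmono : ∀ k, max N₀ m ≤ g k := by
    intro k
    induction k with
    | zero => exact le_refl _
    | succ k ih => rw [hgsucc]; exact le_trans ih (hstep_ge _)
  -- g k ≤ c^k * g 0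
  have hgbound : ∀ k, (g k : ℝ) ≤ c^k * (g 0 : ℝ) := by
    intro k
    induction k with
    | zero => simp
    | succ k ih =>
      rw [hgsucc]
      calc (step (g k) : ℝ) ≤ c * (g k : ℝ) :=
            Nat.floor_le (by positivity)
        _ ≤ c * (c^k * (g 0 : ℝ)) := by
            exact mul_le_mul_of_nonneg_left ih (le_of_lt hcpos)
        _ = c^(k+1) * (g 0 : ℝ) := by ring
  -- F N ≤ N
  have hFle : ∀ N, F N ≤ N := by
    intro N
    calc F N ≤ (Finset.Icc 1 N).card := Finset.card_filter_le _ _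
      _ = N := by simp
  -- F (g 0) ≥ 1
  have hF1 : 1 ≤ F (g 0) := by
    rw [hF]
    apply Finset.card_pos.mpr
    refine ⟨m, Finset.mem_filter.mpr ⟨Finset.mem_Icc.mpr ⟨hm1, ?_⟩, hm⟩⟩
    exact le_max_right _ _
  -- key iteration
  have hiter : ∀ k, (F (g 0) : ℝ) ≤ (1/(2*c))^k * (F (g k) : ℝ) := by
    intro k
    induction k with
    | zero => simp
    | succ k ih =>
      have hNk : N₀ ≤ g k := le_trans (le_max_left _ _) (hgmono k)
      have h1 := hcon (g k) hNk
      have h2 : (F (g k) : ℝ) < 1/(2*c) * (F (g (k+1)) : ℝ) := by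
        rw [hgsucc]; exact h1
      calc (F (g 0) : ℝ) ≤ (1/(2*c))^k * (F (g k) : ℝ) := ih
        _ ≤ (1/(2*c))^k * (1/(2*c) * (F (g (k+1)) : ℝ)) := by
            apply mul_le_mul_of_nonneg_left (le_of_lt h2) (by positivity)
        _ = (1/(2*c))^(k+1) * (F (g (k+1)) : ℝ) := by ring
  -- combine
  obtain ⟨k, hk⟩ : ∃ k, g 0 < 2^k := ⟨g 0, Nat.lt_two_pow_self⟩
  have : (1 : ℝ) ≤ (g 0 : ℝ) / 2^k := by
    calc (1:ℝ) ≤ (F (g 0) : ℝ) := by exact_mod_cast hF1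
      _ ≤ (1/(2*c))^k * (F (g k) : ℝ) := hiter k
      _ ≤ (1/(2*c))^k * (g k : ℝ) := by
          apply mul_le_mul_of_nonneg_left _ (by positivity)
          exact_mod_cast hFle (g k)
      _ ≤ (1/(2*c))^k * (c^k * (g 0 : ℝ)) := by
          apply mul_le_mul_of_nonneg_left (hgbound k) (by positivity)
      _ = (g 0 : ℝ) / 2^k := by
          field_simp
          rw [← mul_pow, show 1 / (2 * c) * c = 1 / 2 by field_simp, mul_right_comm, ← mul_pow]
          norm_num
  have h2k : (2:ℝ)^k ≤ (g 0 : ℝ) := by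
    rw [le_div_iff₀ (by positivity)] at this
    linarith
  have : (2:ℝ)^k < (2:ℝ)^k := lt_of_le_of_lt h2k (by exact_mod_cast hk)
  exact lt_irrefl _ this
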